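/- arXiv:1812.05925 — 2 statements merged into one kernel-verified Lean document; each statement's English description precedes it below -/
import Mathlib

section
/- A Tychonoff space X is Lindelöf if and only if every 1-dense subset of C_p(X) contains a countable 1-dense subset. -/
open Set Filter Topology TopologicalSpace

universe u

/-- The selection principle `S₁(A, B)`: for each sequence of members of `A` one can pick one
element from each so that the chosen elements form a member of `B`. -/
def S1 {Z : Type*} (A B : Set (Set Z)) : Prop :=
  ∀ f : ℕ → Set Z, (∀ n, f n ∈ A) →
    ∃ b : ℕ → Z, (∀ n, b n ∈ f n) ∧ Set.range b ∈ B

/-- The selection principle `S_fin(A, B)`: for each sequence of members of `A` one can pick a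
finite subset of each so that the union of the chosen finite sets is a member of `B`. -/
def Sfin {Z : Type*} (A B : Set (Set Z)) : Prop :=
  ∀ f : ℕ → Set Z, (∀ n, f n ∈ A) →
    ∃ F : ℕ → Set Z, (∀ n, F n ⊆ f n ∧ (F n).Finite) ∧ (⋃ n, F n) ∈ B

/-- The selection principle `U_fin(A, B)` for families of covers of a space `Y`. -/
def Ufin {Y : Type*} (A B : Set (Set (Set Y))) : Prop :=
  ∀ U : ℕ → Set (Set Y), (∀ n, U n ∈ A) →
    (∀ n, ¬ ∃ F, F ⊆ U n ∧ F.Finite ∧ ⋃₀ F = Set.univ) →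
    ∃ F : ℕ → Set (Set Y), (∀ n, F n ⊆ U n ∧ (F n).Finite) ∧
      {V | ∃ n, V = ⋃₀ F n} ∈ B

/-- A zero-set: the preimage of `0` under a continuous real-valued function. -/
def ZeroSet {Y : Type*} [TopologicalSpace Y] (s : Set Y) : Prop :=
  ∃ g : Y → ℝ, Continuous g ∧ s = g ⁻¹' {0}

/-- A cozero set: the complement of a zero-set. -/
def Cozero {Y : Type*} [TopologicalSpace Y] (s : Set Y) : Prop := ZeroSet sᶜ

/-- A `Z_σ`-set: a countable union of zero-sets. -/
def ZsigmaSet {Y : Type*} [TopologicalSpace Y] (s : Set Y) : Prop :=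
  ∃ S : Set (Set Y), S.Countable ∧ (∀ t ∈ S, ZeroSet t) ∧ ⋃₀ S = s

/-- A `z`-space: the complement of every `Z_σ`-set is a `Z_σ`-set. -/
def ZSpace (Y : Type*) [TopologicalSpace Y] : Prop :=
  ∀ s : Set Y, ZsigmaSet s → ZsigmaSet sᶜ

/-- An `F_σ`-set: a countable union of closed sets. -/
def IsFsigma {Y : Type*} [TopologicalSpace Y] (s : Set Y) : Prop :=
  ∃ S : Set (Set Y), S.Countable ∧ (∀ t ∈ S, IsClosed t) ∧ ⋃₀ S = s

/-- An ω-cover (nontrivial: the whole space is not a member): every finite subset of the space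
is contained in some member. -/
def IsOmegaCover {Y : Type*} (𝒰 : Set (Set Y)) : Prop :=
  Set.univ ∉ 𝒰 ∧ ∀ F : Set Y, F.Finite → ∃ U ∈ 𝒰, F ⊆ U

/-- A γ-cover (nontrivial): infinite, and every point belongs to all but finitely many members. -/
def IsGammaCover {Y : Type*} (𝒰 : Set (Set Y)) : Prop :=
  𝒰.Infinite ∧ Set.univ ∉ 𝒰 ∧ ∀ y : Y, {U ∈ 𝒰 | y ∉ U}.Finite

/-- `𝒪`: the family of all (nontrivial) open covers. -/
def openCovers (Y : Type*) [TopologicalSpace Y] : Set (Set (Set Y)) :=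
  {𝒰 | (∀ U ∈ 𝒰, IsOpen U) ∧ ⋃₀ 𝒰 = Set.univ ∧ Set.univ ∉ 𝒰}

/-- `𝒪^ω_cz`: the family of all countable covers by cozero sets. -/
def ctblCozeroCovers (Y : Type*) [TopologicalSpace Y] : Set (Set (Set Y)) :=
  {𝒰 | 𝒰.Countable ∧ (∀ U ∈ 𝒰, Cozero U) ∧ ⋃₀ 𝒰 = Set.univ ∧ Set.univ ∉ 𝒰}

/-- `Ω`: the family of all open ω-covers. -/
def omegaCovers (Y : Type*) [TopologicalSpace Y] : Set (Set (Set Y)) :=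
  {𝒰 | (∀ U ∈ 𝒰, IsOpen U) ∧ IsOmegaCover 𝒰}

/-- `Ω^ω_cz`: the family of all countable ω-covers consisting of cozero sets. -/
def ctblCozeroOmegaCovers (Y : Type*) [TopologicalSpace Y] : Set (Set (Set Y)) :=
  {𝒰 | 𝒰.Countable ∧ (∀ U ∈ 𝒰, Cozero U) ∧ IsOmegaCover 𝒰}

/-- `Γ`: the family of all open γ-covers. -/
def gammaCovers (Y : Type*) [TopologicalSpace Y] : Set (Set (Set Y)) :=
  {𝒰 | (∀ U ∈ 𝒰, IsOpen U) ∧ IsGammaCover 𝒰}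

/-- `Γ_cz`: the family of all γ-covers consisting of cozero sets. -/
def cozeroGammaCovers (Y : Type*) [TopologicalSpace Y] : Set (Set (Set Y)) :=
  {𝒰 | (∀ U ∈ 𝒰, Cozero U) ∧ IsGammaCover 𝒰}

/-- `Γ_F`: γ-covers by cozero sets admitting a γ-cover shrinking consisting of zero-sets. -/
def gammaFCovers (Y : Type*) [TopologicalSpace Y] : Set (Set (Set Y)) :=
  {𝒰 | (∀ U ∈ 𝒰, Cozero U) ∧ IsGammaCover 𝒰 ∧
    ∃ F : Set Y → Set Y, (∀ U ∈ 𝒰, ZeroSet (F U) ∧ F U ⊆ U) ∧ IsGammaCover (F '' 𝒰)}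

/-- `C_p(X)`: continuous real-valued functions on `X` with the topology of pointwise
convergence (the subspace topology inherited from the product topology on `X → ℝ`). -/
abbrev Cp (X : Type u) [TopologicalSpace X] : Type u := {f : X → ℝ // Continuous f}

/-- The constant zero function `𝟎 ∈ C_p(X)`. -/
def zeroF (X : Type u) [TopologicalSpace X] : Cp X := ⟨fun _ => (0 : ℝ), continuous_const⟩

/-- A `1`-dense subset of `C_p(X)`. -/
def OneDense {X : Type u} [TopologicalSpace X] (A : Set (Cp X)) : Prop :=
  ∀ x : X, ∀ W : Set ℝ, IsOpen W → W.Nonempty → ∃ f ∈ A, f.1 x ∈ W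

/-- A subset of `C_p(X)` that is `1`-dense at the point `𝟎`. -/
def OneDenseAtZero {X : Type u} [TopologicalSpace X] (A : Set (Cp X)) : Prop :=
  ∀ x : X, ∀ ε : ℝ, 0 < ε → ∃ h ∈ A, |h.1 x| < ε

/-- `𝒟[1]`: the family of `1`-dense subsets of `C_p(X)`. -/
def D1 (X : Type u) [TopologicalSpace X] : Set (Set (Cp X)) := {A | OneDense A}

/-- `𝒟^ω[1]`: the family of countable `1`-dense subsets of `C_p(X)`. -/
def D1ct (X : Type u) [TopologicalSpace X] : Set (Set (Cp X)) :=
  {A | A.Countable ∧ OneDense A}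

/-- `𝒟_𝟎[1]`: the family of subsets of `C_p(X)` that are `1`-dense at `𝟎`. -/
def D01 (X : Type u) [TopologicalSpace X] : Set (Set (Cp X)) := {A | OneDenseAtZero A}

/-- `𝒟^ω_𝟎[1]`: the countable members of `𝒟_𝟎[1]`. -/
def D01ct (X : Type u) [TopologicalSpace X] : Set (Set (Cp X)) :=
  {A | A.Countable ∧ OneDenseAtZero A}

/-- `𝒟`: the family of dense subsets of `C_p(X)`. -/
def denseFam (X : Type u) [TopologicalSpace X] : Set (Set (Cp X)) := {A | Dense A}

/-- `𝒟^ω`: the family of countable dense subsets of `C_p(X)`. -/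
def ctblDenseFam (X : Type u) [TopologicalSpace X] : Set (Set (Cp X)) :=
  {A | A.Countable ∧ Dense A}

/-- A sequentially dense subset of `C_p(X)`. -/
def SeqDense {X : Type u} [TopologicalSpace X] (D : Set (Cp X)) : Prop :=
  ∀ f : Cp X, ∃ u : ℕ → Cp X, (∀ n, u n ∈ D) ∧ Filter.Tendsto u Filter.atTop (nhds f)

/-- `𝒮`: the family of sequentially dense subsets of `C_p(X)`. -/
def seqDenseFam (X : Type u) [TopologicalSpace X] : Set (Set (Cp X)) := {D | SeqDense D}

/-- `Γ_𝟎`: infinite sets `A ⊆ C_p(X)` with `𝟎 ∉ A` such that every neighborhood of `𝟎`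
contains all but finitely many elements of `A`. -/
def Gamma0 (X : Type u) [TopologicalSpace X] : Set (Set (Cp X)) :=
  {A | A.Infinite ∧ zeroF X ∉ A ∧ ∀ N ∈ nhds (zeroF X), {f ∈ A | f ∉ N}.Finite}

/-- `Ω_𝟎`: sets `A ⊆ C_p(X)` with `𝟎 ∈ cl(A) \ A`. -/
def Omega0 (X : Type u) [TopologicalSpace X] : Set (Set (Cp X)) :=
  {A | zeroF X ∈ closure A \ A}

/-- `Ω^ω_𝟎`: the countable members of `Ω_𝟎`. -/
def Omega0ct (X : Type u) [TopologicalSpace X] : Set (Set (Cp X)) :=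
  {A | A.Countable ∧ zeroF X ∈ closure A \ A}

/-- `X` is projectively `P` if every second countable continuous image of `X` satisfies `P`. -/
def Projectively (X : Type u) [TopologicalSpace X]
    (P : (Y : Type u) → [TopologicalSpace Y] → Prop) : Prop :=
  ∀ (Y : Type u) [TopologicalSpace Y] [SecondCountableTopology Y]
    (f : X → Y), Continuous f → Function.Surjective f → P Y

/-- The Rothberger property `S₁(𝒪, 𝒪)`. -/
def RothbergerSp (Y : Type u) [TopologicalSpace Y] : Prop := S1 (openCovers Y) (openCovers Y)

/-- The Menger property `S_fin(𝒪, 𝒪)`. -/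
def MengerSp (Y : Type u) [TopologicalSpace Y] : Prop := Sfin (openCovers Y) (openCovers Y)

/-- The Hurewicz property `U_fin(𝒪, Γ)`. -/
def HurewiczSp (Y : Type u) [TopologicalSpace Y] : Prop := Ufin (openCovers Y) (gammaCovers Y)

/-- The Gerlits–Nagy property `S₁(Ω, Γ)`. -/
def S1OmegaGammaSp (Y : Type u) [TopologicalSpace Y] : Prop :=
  S1 (omegaCovers Y) (gammaCovers Y)

/-- The property `S₁(Ω, Ω)`. -/
def S1OmegaOmegaSp (Y : Type u) [TopologicalSpace Y] : Prop :=
  S1 (omegaCovers Y) (omegaCovers Y)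

/-- The property `S_fin(Ω, Ω)`. -/
def SfinOmegaOmegaSp (Y : Type u) [TopologicalSpace Y] : Prop :=
  Sfin (omegaCovers Y) (omegaCovers Y)

/-- The property `S₁(Γ, Ω)`. -/
def S1GammaOmegaSp (Y : Type u) [TopologicalSpace Y] : Prop :=
  S1 (gammaCovers Y) (omegaCovers Y)

/-- The property `S_fin(Γ, Ω)`. -/
def SfinGammaOmegaSp (Y : Type u) [TopologicalSpace Y] : Prop :=
  Sfin (gammaCovers Y) (omegaCovers Y)

/-- The property `U_fin(𝒪, Ω)`. -/
def UfinOOmegaSp (Y : Type u) [TopologicalSpace Y] : Prop :=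
  Ufin (openCovers Y) (omegaCovers Y)

/-- The property `S₁(Γ, 𝒪)`. -/
def S1GammaOSp (Y : Type u) [TopologicalSpace Y] : Prop :=
  S1 (gammaCovers Y) (openCovers Y)

/-- The property `S₁(Γ, Γ)`. -/
def S1GammaGammaSp (Y : Type u) [TopologicalSpace Y] : Prop :=
  S1 (gammaCovers Y) (gammaCovers Y)

/-- The property `S_fin(Γ, Γ)`. -/
def SfinGammaGammaSp (Y : Type u) [TopologicalSpace Y] : Prop :=
  Sfin (gammaCovers Y) (gammaCovers Y)

/-- Auxiliary predicate for the `V`-property with an explicit witness. -/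
def VPropertyWitness (X : Type u) [TopologicalSpace X] (Y : Type u) [TopologicalSpace Y]
    (f : X → Y) : Prop :=
  MetrizableSpace Y ∧ SeparableSpace Y ∧ Continuous f ∧ Function.Bijective f ∧
    ∀ U : Set X, Cozero U → IsFsigma (f '' U)

/-- The `V`-property: there is a continuous bijection onto a separable metrizable space taking
cozero sets to `F_σ`-sets. -/
def VProperty (X : Type u) [TopologicalSpace X] : Prop :=
  ∃ (Y : Type u) (tY : TopologicalSpace Y) (f : X → Y), @VPropertyWitness X _ Y tY f

/-- `X` admits a coarser second countable topology. -/
def HasCoarserSecondCountableTopology (X : Type u) [TopologicalSpace X] : Prop :=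
  ∃ t' : TopologicalSpace X, @SecondCountableTopology X t' ∧
    ∀ s : Set X, IsOpen[t'] s → IsOpen s

/-- A Tychonoff space `X` is Lindelöf iff every `1`-dense subset of `C_p(X)`
contains a countable `1`-dense subset. -/
theorem statement1 (X : Type u) [TopologicalSpace X] [T35Space X] :
    (∀ 𝒰 : Set (Set X), (∀ U ∈ 𝒰, IsOpen U) → ⋃₀ 𝒰 = Set.univ →
      ∃ 𝒱 ⊆ 𝒰, 𝒱.Countable ∧ ⋃₀ 𝒱 = Set.univ) ↔
    (∀ A : Set (Cp X), OneDense A → ∃ B ⊆ A, B.Countable ∧ OneDense B) := by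
  constructor
  · intro hL A hA
    have key : ∀ p : ℚ × ℚ, (p.1 : ℝ) < p.2 →
        ∃ B ⊆ A, B.Countable ∧ ∀ x : X, ∃ f ∈ B, f.1 x ∈ Set.Ioo (p.1 : ℝ) p.2 := by
      intro p hp
      set 𝒰 : Set (Set X) := {s | ∃ f ∈ A, s = f.1 ⁻¹' Set.Ioo (p.1 : ℝ) p.2} with h𝒰
      have hopen : ∀ U ∈ 𝒰, IsOpen U := by
        rintro U ⟨f, hf, rfl⟩
        exact isOpen_Ioo.preimage f.2
      have hcov : ⋃₀ 𝒰 = Set.univ := by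
        ext x
        simp only [Set.mem_sUnion, Set.mem_univ, iff_true]
        obtain ⟨f, hfA, hfx⟩ := hA x (Set.Ioo (p.1 : ℝ) p.2) isOpen_Ioo
          ⟨((p.1 : ℝ) + p.2) / 2, by constructor <;> linarith⟩
        exact ⟨_, ⟨f, hfA, rfl⟩, hfx⟩
      obtain ⟨𝒱, h𝒱𝒰, h𝒱c, h𝒱cov⟩ := hL 𝒰 hopen hcov
      have hch : ∀ V : 𝒱, ∃ f ∈ A, (V : Set X) = f.1 ⁻¹' Set.Ioo (p.1 : ℝ) p.2 :=
        fun V => h𝒱𝒰 V.2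
      choose g hg1 hg2 using hch
      have := h𝒱c.to_subtype
      refine ⟨Set.range g, ?_, Set.countable_range g, ?_⟩
      · rintro f ⟨V, rfl⟩; exact hg1 V
      · intro x
        have : x ∈ ⋃₀ 𝒱 := h𝒱cov ▸ Set.mem_univ x
        obtain ⟨V, hV, hxV⟩ := this
        refine ⟨g ⟨V, hV⟩, Set.mem_range_self _, ?_⟩
        have : x ∈ (g ⟨V, hV⟩).1 ⁻¹' Set.Ioo (p.1 : ℝ) p.2 := by
          rw [← hg2 ⟨V, hV⟩]; exact hxV
        exact this
    set P : Set (ℚ × ℚ) := {p | (p.1 : ℝ) < p.2} with hP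
    have hch : ∀ p : P, ∃ B ⊆ A, B.Countable ∧
        ∀ x : X, ∃ f ∈ B, f.1 x ∈ Set.Ioo ((p : ℚ × ℚ).1 : ℝ) (p : ℚ × ℚ).2 :=
      fun p => key p p.2
    choose Bf hB1 hB2 hB3 using hch
    refine ⟨⋃ p, Bf p, Set.iUnion_subset hB1, Set.countable_iUnion hB2, ?_⟩
    intro x W hW hWne
    obtain ⟨r, hr⟩ := hWne
    obtain ⟨ε, hε, hball⟩ := Metric.isOpen_iff.1 hW r hr
    obtain ⟨a, ha1, ha2⟩ := exists_rat_btwn (show r - ε < r by linarith)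
    obtain ⟨b, hb1, hb2⟩ := exists_rat_btwn (show r < r + ε by linarith)
    have hab : ((a : ℝ), (b : ℝ)) ∈ Set.Ioo (r - ε) (r + ε) ×ˢ Set.Ioo (r - ε) (r + ε) := by
      constructor <;> constructor <;> linarith
    have hpP : ((a, b) : ℚ × ℚ) ∈ P := by simpa [hP] using lt_trans ha2 hb1
    obtain ⟨f, hfB, hfx⟩ := hB3 ⟨(a, b), hpP⟩ x
    refine ⟨f, Set.mem_iUnion.2 ⟨⟨(a, b), hpP⟩, hfB⟩, hball ?_⟩
    rw [Real.ball_eq_Ioo]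
    obtain ⟨h1, h2⟩ := hfx
    constructor <;> simp only at h1 h2 <;> linarith
  · intro h 𝒰 hopen hcov
    by_cases hX : IsEmpty X
    · exact ⟨∅, Set.empty_subset _, Set.countable_empty, by
        simp [Set.sUnion_empty, Set.eq_empty_of_isEmpty (Set.univ : Set X)]⟩
    rw [not_isEmpty_iff] at hX
    set A : Set {f : X → ℝ // Continuous f} :=
      {f | ∃ U ∈ 𝒰, ∀ x ∉ U, f.1 x = 0} with hA
    have hAdense : OneDense A := by
      intro x W hW hWne
      obtain ⟨r, hr⟩ := hWne
      have hx : x ∈ ⋃₀ 𝒰 := hcov ▸ Set.mem_univ x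
      obtain ⟨U, hU𝒰, hxU⟩ := hx
      obtain ⟨g, hgc, hgx, hgK⟩ := CompletelyRegularSpace.completely_regular x Uᶜ
        (hopen U hU𝒰).isClosed_compl (by simpa using hxU)
      refine ⟨⟨fun y => r * (1 - (g y : ℝ)), by continuity⟩, ⟨U, hU𝒰, ?_⟩, ?_⟩
      · intro y hy
        have : g y = 1 := hgK hy
        simp [this]
      · have : (g x : ℝ) = 0 := by rw [hgx]; rfl
        simpa [this] using hr
    obtain ⟨B, hBA, hBc, hBdense⟩ := h A hAdense
    have hch : ∀ f : B, ∃ U ∈ 𝒰, ∀ x ∉ U, (f : {f : X → ℝ // Continuous f}).1 x = 0 :=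
      fun f => hBA f.2
    choose Uf hUf1 hUf2 using hch
    have := hBc.to_subtype
    refine ⟨Set.range Uf, ?_, Set.countable_range Uf, ?_⟩
    · rintro V ⟨f, rfl⟩; exact hUf1 f
    · apply Set.eq_univ_of_forall
      intro x
      obtain ⟨f, hfB, hfx⟩ := hBdense x (Set.Ioi 0) isOpen_Ioi ⟨1, by norm_num⟩
      refine ⟨Uf ⟨f, hfB⟩, Set.mem_range_self _, ?_⟩
      by_contra hx
      have := hUf2 ⟨f, hfB⟩ x hx
      simp only at this
      rw [this] at hfx
      exact lt_irrefl 0 (Set.mem_Ioi.1 hfx)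
end

section
/- For a Tychonoff space X, C_p(X) satisfies S₁(𝒟[1], 𝒟[1]) if and only if C_p(X) satisfies S₁(𝒟^ω[1], 𝒟[1]) and every 1-dense subset of C_p(X) contains a countable 1-dense subset. -/
open Set Filter Topology TopologicalSpace

universe u

/-- `C_p(X)` satisfies `S₁(𝒟[1], 𝒟[1])` iff `C_p(X)` satisfies
`S₁(𝒟^ω[1], 𝒟[1])` and every `1`-dense subset of `C_p(X)` contains a countable `1`-dense
subset. -/
theorem statement2 (X : Type u) [TopologicalSpace X] [T35Space X] :
    S1 (D1 X) (D1 X) ↔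
      (S1 (D1ct X) (D1 X) ∧
        ∀ A : Set (Cp X), OneDense A → ∃ B ⊆ A, B.Countable ∧ OneDense B) := by
  constructor
  · intro h
    constructor
    · intro f hf
      exact h f (fun n => (hf n).2)
    · intro A hA
      obtain ⟨b, hb, hrange⟩ := h (fun _ => A) (fun _ => hA)
      exact ⟨Set.range b, Set.range_subset_iff.2 (fun n => hb n),
        Set.countable_range b, hrange⟩
  · rintro ⟨h1, h2⟩ f hf
    choose B hBsub hBct hBdense using fun n => h2 (f n) (hf n)
    obtain ⟨b, hb, hrange⟩ := h1 B (fun n => ⟨hBct n, hBdense n⟩)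
    exact ⟨b, fun n => hBsub n (hb n), hrange⟩
end
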